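/- If 𝓗 is a finite hypergraph in which every vertex avoids at least one hyperedge, then Θ(𝓗*) is homotopy equivalent to Θ(𝓗). -/

import Mathlib

/-- A hypergraph on vertex type `V` is given by its set `H` of hyperedges
(subsets of `V`).  The theta complex `Θ(𝓗)` has as simplices the nonempty
finite subsets of `V` that are disjoint from at least one hyperedge. -/
def thetaComplex {V : Type*} (H : Set (Set V)) : Set (Finset V) :=
  {σ : Finset V | σ.Nonempty ∧ ∃ h ∈ H, ∀ v ∈ σ, v ∉ h}

/-- The geometric realization of a complex `K` of finite subsets of `V`:
convex combinations of vertices supported on a simplex of `K`, topologized as a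
subspace of `V → ℝ`. -/
def geomReal {V : Type*} (K : Set (Finset V)) : Set (V → ℝ) :=
  {f | (∀ v, 0 ≤ f v) ∧ ∃ σ ∈ K, (∀ v, f v ≠ 0 → v ∈ σ) ∧ ∑ v ∈ σ, f v = 1}

/-- The dual hypergraph `𝓗*`: its vertices are the hyperedges of `𝓗`, and it
has one hyperedge `h_v = {h ∈ H | v ∈ h}` for each vertex `v` of `𝓗`. -/
def dualEdges {V : Type*} (H : Set (Set V)) : Set (Set ↥H) :=
  Set.range (fun v : V => {h : ↥H | v ∈ (h : Set V)})

namespace DowkerAux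
set_option linter.unusedSectionVars false
attribute [local instance] Classical.propDecidable
noncomputable section
open Finset

/-- The order complex of a partial order: nonempty finite chains. -/
def orderCx (P : Type*) [PartialOrder P] : Set (Finset P) :=
  {c | c.Nonempty ∧ ∀ p ∈ c, ∀ q ∈ c, p ≤ q ∨ q ≤ p}

variable {A B C : Type*} [Fintype A] [Fintype B]

/-- Pushforward of a weight function along a map of vertex sets. -/
def push (φ : A → B) (x : A → ℝ) : B → ℝ :=
  fun b => ∑ a, if φ a = b then x a else 0

lemma push_nonneg (φ : A → B) {x : A → ℝ} (hx : ∀ a, 0 ≤ x a) (b : B) :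
    0 ≤ push φ x b := by
  refine Finset.sum_nonneg fun a _ => ?_
  split
  · exact hx a
  · exact le_rfl

lemma push_support {φ : A → B} {x : A → ℝ} {b : B} (h : push φ x b ≠ 0) :
    ∃ a, x a ≠ 0 ∧ φ a = b := by
  by_contra hc
  push_neg at hc
  apply h
  apply Finset.sum_eq_zero
  intro a _
  split
  · rename_i he
    by_contra hxa
    exact (hc a hxa) he
  · rfl

lemma sum_push (φ : A → B) (x : A → ℝ) (t : Finset B)
    (h : ∀ a, x a ≠ 0 → φ a ∈ t) : ∑ b ∈ t, push φ x b = ∑ a, x a := by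
  unfold push
  rw [Finset.sum_comm]
  refine Finset.sum_congr rfl fun a _ => ?_
  rw [Finset.sum_ite_eq]
  by_cases hxa : x a = 0
  · simp [hxa]
  · simp [h a hxa]

lemma push_push (φ : A → B) (ψ : B → C) (x : A → ℝ) :
    push ψ (push φ x) = push (ψ ∘ φ) x := by
  funext c
  unfold push
  calc ∑ b, (if ψ b = c then ∑ a, (if φ a = b then x a else 0) else 0)
      = ∑ b, ∑ a, (if φ a = b then (if ψ b = c then x a else 0) else 0) := by
        refine Finset.sum_congr rfl fun b _ => ?_
        split
        · refine Finset.sum_congr rfl fun a _ => ?_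
          split <;> simp_all
        · simp_all
    _ = ∑ a, ∑ b, (if φ a = b then (if ψ b = c then x a else 0) else 0) :=
        Finset.sum_comm
    _ = ∑ a, (if (ψ ∘ φ) a = c then x a else 0) := by
        refine Finset.sum_congr rfl fun a _ => ?_
        rw [Finset.sum_ite_eq]
        simp

lemma push_id (x : A → ℝ) : push id x = x := by
  funext a
  unfold push
  simp only [id_eq]
  have : ∀ b ∈ Finset.univ, ∀ _ : b ≠ a, (if b = a then x b else 0) = 0 := by
    intro b _ hb; simp [hb]
  calc (∑ b, if b = a then x b else 0) = if a = a then x a else 0 :=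
        Finset.sum_eq_single a this (fun h => absurd (Finset.mem_univ _) h)
    _ = x a := by simp

lemma continuous_push (φ : A → B) : Continuous (push φ) := by
  apply continuous_pi
  intro b
  apply continuous_finset_sum
  intro a _
  by_cases h : φ a = b
  · simpa [push, h] using continuous_apply a
  · simpa [push, h] using continuous_const

lemma sum_univ_of_support {x : A → ℝ} {σ : Finset A} (h : ∀ a, x a ≠ 0 → a ∈ σ) :
    ∑ a ∈ σ, x a = ∑ a, x a := by
  apply Finset.sum_subset (Finset.subset_univ σ)
  intro a _ ha
  by_contra hxa
  exact ha (h a hxa)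

lemma push_mem_geomReal (φ : A → B) (KA : Set (Finset A)) (KB : Set (Finset B))
    (hφ : ∀ σ ∈ KA, Finset.image φ σ ∈ KB) {x : A → ℝ} (hx : x ∈ geomReal KA) :
    push φ x ∈ geomReal KB := by
  obtain ⟨hx0, σ, hσK, hsupp, hsum⟩ := hx
  refine ⟨push_nonneg φ hx0, Finset.image φ σ, hφ σ hσK, ?_, ?_⟩
  · intro b hb
    obtain ⟨a, hxa, rfl⟩ := push_support hb
    exact Finset.mem_image_of_mem φ (hsupp a hxa)
  · rw [sum_push φ x _ (fun a ha => Finset.mem_image_of_mem φ (hsupp a ha))]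
    rw [← sum_univ_of_support hsupp, hsum]


section Subdiv


variable {A : Type*} [Fintype A]

/-- max of `y` over `s`, floored at `0`. -/
def smx (s : Finset A) (y : A → ℝ) : ℝ := s.fold max 0 y

lemma smx_le {s : Finset A} {y : A → ℝ} {c : ℝ} :
    smx s y ≤ c ↔ 0 ≤ c ∧ ∀ v ∈ s, y v ≤ c := Finset.fold_max_le c

lemma le_smx {s : Finset A} {y : A → ℝ} {v : A} (h : v ∈ s) : y v ≤ smx s y :=
  (smx_le.1 le_rfl).2 v h

lemma smx_nonneg (s : Finset A) (y : A → ℝ) : 0 ≤ smx s y := (smx_le.1 le_rfl).1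

lemma smx_congr {s : Finset A} {y z : A → ℝ} (h : ∀ v ∈ s, y v = z v) :
    smx s y = smx s z := by
  apply le_antisymm <;> rw [smx_le]
  · exact ⟨smx_nonneg _ _, fun v hv => (h v hv) ▸ le_smx hv⟩
  · exact ⟨smx_nonneg _ _, fun v hv => (h v hv) ▸ le_smx hv⟩

lemma smx_congr_zero {s s' : Finset A} {y : A → ℝ} (hss : s' ⊆ s)
    (h0 : ∀ v ∈ s, v ∉ s' → y v = 0) (hy : ∀ v, 0 ≤ y v) :
    smx s y = smx s' y := by
  apply le_antisymm <;> rw [smx_le]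
  · refine ⟨smx_nonneg _ _, fun v hv => ?_⟩
    by_cases h : v ∈ s'
    · exact le_smx h
    · rw [h0 v hv h]; exact smx_nonneg _ _
  · exact ⟨smx_nonneg _ _, fun v hv => le_smx (hss hv)⟩

lemma smx_eq_zero {s : Finset A} {y : A → ℝ} (h0 : ∀ v ∈ s, y v = 0) :
    smx s y = 0 := by
  refine le_antisymm (smx_le.2 ⟨le_rfl, fun v hv => le_of_eq (h0 v hv)⟩) (smx_nonneg _ _)

lemma smx_shift {s : Finset A} (hs : s.Nonempty) {y : A → ℝ} (hy : ∀ v ∈ s, 0 ≤ y v)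
    {c : ℝ} (hc : 0 ≤ c) : smx s (fun v => y v + c) = smx s y + c := by
  apply le_antisymm
  · rw [smx_le]
    refine ⟨by linarith [smx_nonneg s y], fun v hv => by linarith [le_smx (y := y) hv]⟩
  · obtain ⟨v₀, hv₀⟩ := hs
    have h1 : smx s y ≤ smx s (fun v => y v + c) - c := by
      rw [smx_le]
      constructor
      · have := le_smx (y := fun v => y v + c) hv₀
        have := hy v₀ hv₀
        linarith
      · intro v hv
        have := le_smx (y := fun v => y v + c) hv
        linarith
    linarith

lemma continuous_smx (s : Finset A) : Continuous (smx s : (A → ℝ) → ℝ) := by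
  classical
  induction s using Finset.induction_on with
  | empty => exact (continuous_const : Continuous fun _ : (A → ℝ) => (0:ℝ))
  | insert a s h ih =>
    have : (smx (insert a s) : (A → ℝ) → ℝ) = fun y => max (y a) (smx s y) := by
      funext y; simp [smx, Finset.fold_insert h]
    rw [this]
    exact Continuous.max (continuous_apply a) ih

/-- min of `y` over `s` (`0` if `s` is empty). -/
def smn (s : Finset A) (y : A → ℝ) : ℝ := if h : s.Nonempty then s.inf' h y else 0

lemma smn_le {s : Finset A} {y : A → ℝ} {v : A} (h : v ∈ s) : smn s y ≤ y v := by
  rw [smn, dif_pos ⟨v, h⟩]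
  exact Finset.inf'_le _ h

lemma le_smn {s : Finset A} (hs : s.Nonempty) {y : A → ℝ} {c : ℝ} :
    c ≤ smn s y ↔ ∀ v ∈ s, c ≤ y v := by
  rw [smn, dif_pos hs]
  exact Finset.le_inf'_iff hs y

lemma smn_exists {s : Finset A} (hs : s.Nonempty) (y : A → ℝ) :
    ∃ v ∈ s, smn s y = y v := by
  rw [smn, dif_pos hs]
  exact Finset.exists_mem_eq_inf' hs y

lemma smn_congr {s : Finset A} {y z : A → ℝ} (h : ∀ v ∈ s, y v = z v) :
    smn s y = smn s z := by
  by_cases hs : s.Nonempty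
  · apply le_antisymm
    · obtain ⟨v, hv, he⟩ := smn_exists hs z
      rw [he, ← h v hv]; exact smn_le hv
    · obtain ⟨v, hv, he⟩ := smn_exists hs y
      rw [he, h v hv]; exact smn_le hv
  · simp [smn, hs]

lemma smn_shift {s : Finset A} (hs : s.Nonempty) (y : A → ℝ) (c : ℝ) :
    smn s (fun v => y v + c) = smn s y + c := by
  apply le_antisymm
  · obtain ⟨v, hv, he⟩ := smn_exists hs y
    calc smn s (fun v => y v + c) ≤ y v + c := smn_le hv
    _ = smn s y + c := by rw [he]
  · rw [le_smn hs]
    intro v hv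
    have := smn_le (y := y) hv
    linarith

lemma smn_nonneg {s : Finset A} {y : A → ℝ} (hy : ∀ v ∈ s, 0 ≤ y v) : 0 ≤ smn s y := by
  by_cases hs : s.Nonempty
  · obtain ⟨v, hv, he⟩ := smn_exists hs y
    rw [he]; exact hy v hv
  · simp [smn, hs]

lemma continuous_smn (s : Finset A) : Continuous (smn s : (A → ℝ) → ℝ) := by
  by_cases hs : s.Nonempty
  · have he : (smn s : (A → ℝ) → ℝ) = fun y => s.inf' hs y := by
      funext y; rw [smn, dif_pos hs]
    rw [he]
    clear he
    induction hs using Finset.Nonempty.cons_induction with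
    | singleton a => simpa using continuous_apply a
    | cons a s ha hs ih =>
      have : (fun y : A → ℝ => (Finset.cons a s ha).inf' ⟨a, Finset.mem_cons_self a s⟩ y)
          = fun y => min (y a) (s.inf' hs y) := by
        funext y
        rw [Finset.inf'_cons]
      rw [this]
      exact Continuous.min (continuous_apply a) ih
  · have he : (smn s : (A → ℝ) → ℝ) = fun _ => 0 := by
      funext y; rw [smn, dif_neg hs]
    rw [he]
    exact continuous_const

/-- the "gap" of `y` at a candidate superlevel set `s`. -/
def hgap (y : A → ℝ) (s : Finset A) : ℝ := max (smn s y - smx sᶜ y) 0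

lemma hgap_nonneg (y : A → ℝ) (s : Finset A) : 0 ≤ hgap y s := le_max_right _ _

lemma hgap_pos_arg {y : A → ℝ} {s : Finset A} (h : hgap y s ≠ 0) :
    smx sᶜ y < smn s y := by
  by_contra hc
  push_neg at hc
  exact h (by rw [hgap, max_eq_right (by linarith)])

lemma hgap_eq_of_nonpos {y : A → ℝ} {s : Finset A} (h : smn s y ≤ smx sᶜ y) :
    hgap y s = 0 := max_eq_right (by linarith)

/-- a set with positive gap is a superlevel set. -/
lemma superlevel {y : A → ℝ} {s : Finset A} (h : hgap y s ≠ 0) :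
    s = Finset.univ.filter (fun v => smn s y ≤ y v) := by
  have harg := hgap_pos_arg h
  apply Finset.Subset.antisymm
  · intro v hv
    simp only [Finset.mem_filter, Finset.mem_univ, true_and]
    exact smn_le hv
  · intro v hv
    simp only [Finset.mem_filter, Finset.mem_univ, true_and] at hv
    by_contra hvs
    have : y v ≤ smx sᶜ y := le_smx (by simpa using hvs)
    linarith

lemma hgap_chain {y : A → ℝ} {s s' : Finset A} (h : hgap y s ≠ 0) (h' : hgap y s' ≠ 0) :
    s ⊆ s' ∨ s' ⊆ s := by
  rcases le_total (smn s y) (smn s' y) with hle | hle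
  · right
    rw [superlevel h, superlevel h']
    intro v hv
    simp only [Finset.mem_filter, Finset.mem_univ, true_and] at *
    linarith
  · left
    rw [superlevel h, superlevel h']
    intro v hv
    simp only [Finset.mem_filter, Finset.mem_univ, true_and] at *
    linarith


end Subdiv

section BetaIota
variable {A : Type*} [Fintype A] {K : Set (Finset A)}

lemma subtype_le_iff {p q : {σ : Finset A // σ ∈ K}} : p ≤ q ↔ p.1 ⊆ q.1 := Iff.rfl

/-- barycentric map: from weights on simplices to weights on vertices. -/
def beta (K : Set (Finset A)) (x : {σ : Finset A // σ ∈ K} → ℝ) : A → ℝ :=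
  fun v => ∑ p : {σ : Finset A // σ ∈ K}, if v ∈ p.1 then x p / (p.1.card : ℝ) else 0

/-- inverse barycentric map. -/
def iota (K : Set (Finset A)) (y : A → ℝ) : {σ : Finset A // σ ∈ K} → ℝ :=
  fun p => p.1.card * hgap y p.1

lemma iota_nonneg (y : A → ℝ) (p : {σ : Finset A // σ ∈ K}) : 0 ≤ iota K y p :=
  mul_nonneg (Nat.cast_nonneg _) (hgap_nonneg _ _)

lemma beta_nonneg {x : {σ : Finset A // σ ∈ K} → ℝ} (hx : ∀ p, 0 ≤ x p) (v : A) :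
    0 ≤ beta K x v := by
  refine Finset.sum_nonneg fun p _ => ?_
  split
  · exact div_nonneg (hx p) (Nat.cast_nonneg _)
  · exact le_rfl

lemma beta_support {x : {σ : Finset A // σ ∈ K} → ℝ} {v : A} (h : beta K x v ≠ 0) :
    ∃ p, x p ≠ 0 ∧ v ∈ p.1 := by
  by_contra hc
  push_neg at hc
  apply h
  apply Finset.sum_eq_zero
  intro p _
  split
  · rename_i hv
    by_cases hxp : x p = 0
    · rw [hxp, zero_div]
    · exact absurd hv (hc p hxp)
  · rfl

lemma sum_beta (hKne : ∀ σ ∈ K, σ.Nonempty) (x : {σ : Finset A // σ ∈ K} → ℝ)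
    (t : Finset A) (h : ∀ p, x p ≠ 0 → p.1 ⊆ t) :
    ∑ v ∈ t, beta K x v = ∑ p, x p := by
  unfold beta
  rw [Finset.sum_comm]
  refine Finset.sum_congr rfl fun p _ => ?_
  rw [Finset.sum_ite_mem]
  rw [Finset.sum_const]
  by_cases hxp : x p = 0
  · simp [hxp]
  · rw [Finset.inter_eq_right.2 (h p hxp)]
    rw [nsmul_eq_mul]
    rw [mul_div_cancel₀]
    exact_mod_cast (Finset.card_pos.2 (hKne p.1 p.2)).ne'

lemma beta_add (u w : {σ : Finset A // σ ∈ K} → ℝ) (v : A) :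
    beta K (fun p => u p + w p) v = beta K u v + beta K w v := by
  unfold beta
  rw [← Finset.sum_add_distrib]
  refine Finset.sum_congr rfl fun p _ => ?_
  split
  · rw [add_div]
  · rw [add_zero]

lemma beta_single (p₀ : {σ : Finset A // σ ∈ K}) (c : ℝ) (v : A) :
    beta K (fun p => if p = p₀ then c else 0) v
      = if v ∈ p₀.1 then c / (p₀.1.card : ℝ) else 0 := by
  unfold beta
  rw [Finset.sum_eq_single p₀]
  · simp
  · intro p _ hp
    simp [hp]
  · intro h; exact absurd (Finset.mem_univ _) h

lemma continuous_beta : Continuous (beta K) := by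
  apply continuous_pi
  intro v
  apply continuous_finset_sum
  intro p _
  by_cases h : v ∈ p.1
  · simp only [beta, if_pos h]
    exact (continuous_apply p).div_const _
  · simp only [beta, if_neg h]
    exact continuous_const

lemma continuous_iota : Continuous (iota K) := by
  apply continuous_pi
  intro p
  apply Continuous.mul continuous_const
  exact Continuous.max ((continuous_smn _).sub (continuous_smx _)) continuous_const

end BetaIota

section Inverse
variable {A : Type*} [Fintype A] {K : Set (Finset A)}

lemma iota_beta_zero (hKne : ∀ σ ∈ K, σ.Nonempty) {x : {σ : Finset A // σ ∈ K} → ℝ}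
    (hx : ∀ p, x p = 0) : iota K (beta K x) = x := by
  have hb : ∀ v, beta K x v = 0 := by
    intro v
    apply Finset.sum_eq_zero
    intro p _
    simp [hx p]
  funext p
  rw [hx p]
  unfold iota
  have h1 : smn p.1 (beta K x) = 0 := by
    apply le_antisymm
    · obtain ⟨v, hv⟩ := hKne p.1 p.2
      calc smn p.1 (beta K x) ≤ beta K x v := smn_le hv
        _ = 0 := hb v
    · exact smn_nonneg fun v _ => (hb v).ge
  have h2 : smx p.1ᶜ (beta K x) = 0 := smx_eq_zero fun v _ => hb v
  rw [hgap, h1, h2]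
  simp

lemma iota_beta (hKne : ∀ σ ∈ K, σ.Nonempty) (x : {σ : Finset A // σ ∈ K} → ℝ)
    (hx0 : ∀ p, 0 ≤ x p)
    (hch : ∀ p q, x p ≠ 0 → x q ≠ 0 → p.1 ⊆ q.1 ∨ q.1 ⊆ p.1) :
    iota K (beta K x) = x := by
  suffices h : ∀ (n : ℕ) (x : {σ : Finset A // σ ∈ K} → ℝ), (∀ p, 0 ≤ x p) →
      (∀ p q, x p ≠ 0 → x q ≠ 0 → p.1 ⊆ q.1 ∨ q.1 ⊆ p.1) →
      (Finset.univ.filter (fun p => x p ≠ 0)).card ≤ n → iota K (beta K x) = x by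
    exact h _ x hx0 hch le_rfl
  clear hx0 hch x
  intro n
  induction n with
  | zero =>
    intro x _ _ hcard
    apply iota_beta_zero hKne
    intro p
    by_contra hp
    have : p ∈ Finset.univ.filter (fun p => x p ≠ 0) := Finset.mem_filter.2 ⟨Finset.mem_univ _, hp⟩
    have := Finset.card_pos.2 ⟨p, this⟩
    omega
  | succ n ih =>
    intro x hx0 hch hcard
    by_cases hs : (Finset.univ.filter (fun p => x p ≠ 0)).Nonempty
    swap
    · apply iota_beta_zero hKne
      intro p
      by_contra hp
      exact hs ⟨p, Finset.mem_filter.2 ⟨Finset.mem_univ _, hp⟩⟩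
    obtain ⟨pm, hpm, hpmax⟩ : ∃ m ∈ Finset.univ.filter (fun p => x p ≠ 0), ∀ y ∈ Finset.univ.filter (fun p => x p ≠ 0), ¬ m < y :=
      (Finset.exists_maximal hs).elim fun i ⟨hi, hmax⟩ =>
        ⟨i, hi, fun y hy hlt => lt_irrefl _ (lt_of_lt_of_le hlt (hmax hy hlt.le))⟩
    have hpm_ne : x pm ≠ 0 := (Finset.mem_filter.1 hpm).2
    have hle : ∀ q, x q ≠ 0 → q.1 ⊆ pm.1 := by
      intro q hq
      rcases hch q pm hq hpm_ne with h | h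
      · exact h
      · have hle' : pm ≤ q := h
        rcases eq_or_lt_of_le hle' with he | hlt
        · rw [← he]
        · exact absurd hlt (hpmax q (Finset.mem_filter.2 ⟨Finset.mem_univ _, hq⟩))
    set g := Function.update x pm 0 with hg_def
    have hgval : ∀ p, p ≠ pm → g p = x p := fun p hp => Function.update_of_ne hp _ _
    have hgpm : g pm = 0 := Function.update_self _ _ _
    have hg0 : ∀ p, 0 ≤ g p := by
      intro p
      by_cases hp : p = pm
      · rw [hp, hgpm]
      · rw [hgval p hp]; exact hx0 p
    have hgsupp : ∀ p, g p ≠ 0 → x p ≠ 0 ∧ p ≠ pm := by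
      intro p hp
      by_cases h : p = pm
      · rw [h, hgpm] at hp; exact absurd rfl hp
      · rw [hgval p h] at hp; exact ⟨hp, h⟩
    have hgch : ∀ p q, g p ≠ 0 → g q ≠ 0 → p.1 ⊆ q.1 ∨ q.1 ⊆ p.1 :=
      fun p q hp hq => hch p q (hgsupp p hp).1 (hgsupp q hq).1
    have hgcard : (Finset.univ.filter (fun p => g p ≠ 0)).card ≤ n := by
      have hsub : Finset.univ.filter (fun p => g p ≠ 0)
          ⊆ (Finset.univ.filter (fun p => x p ≠ 0)).erase pm := by
        intro p hp
        have := hgsupp p (Finset.mem_filter.1 hp).2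
        exact Finset.mem_erase.2 ⟨this.2, Finset.mem_filter.2 ⟨Finset.mem_univ _, this.1⟩⟩
      have h1 := Finset.card_le_card hsub
      rw [Finset.card_erase_of_mem hpm] at h1
      omega
    have IH := ih g hg0 hgch hgcard
    set c := x pm with hc_def
    have hcpos : 0 < c := lt_of_le_of_ne (hx0 pm) (Ne.symm hpm_ne)
    have hn₀ : (0:ℝ) < (pm.1.card : ℝ) := by
      exact_mod_cast Finset.card_pos.2 (hKne pm.1 pm.2)
    have hyd : ∀ v, beta K x v = beta K g v + (if v ∈ pm.1 then c / (pm.1.card : ℝ) else 0) := by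
      intro v
      have hx_eq : x = fun p => g p + (if p = pm then c else 0) := by
        funext p
        by_cases hp : p = pm
        · rw [hp, hgpm, zero_add, if_pos rfl]
        · rw [hgval p hp, if_neg hp, add_zero]
      conv_lhs => rw [hx_eq]
      rw [beta_add, beta_single]
    have hy'supp : ∀ v, v ∉ pm.1 → beta K g v = 0 := by
      intro v hv
      by_contra h
      obtain ⟨p, hp, hvp⟩ := beta_support h
      exact hv (hle p (hgsupp p hp).1 hvp)
    have hy'0 : ∀ v, 0 ≤ beta K g v := beta_nonneg hg0
    have hv₀ : ∃ v₀ ∈ pm.1, beta K g v₀ = 0 := by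
      by_cases hs' : (Finset.univ.filter (fun p => g p ≠ 0)).Nonempty
      · obtain ⟨q₂, hq₂, hq₂max⟩ : ∃ m ∈ Finset.univ.filter (fun p => g p ≠ 0), ∀ y ∈ Finset.univ.filter (fun p => g p ≠ 0), ¬ m < y :=
          (Finset.exists_maximal hs').elim fun i ⟨hi, hmax⟩ =>
            ⟨i, hi, fun y hy hlt => lt_irrefl _ (lt_of_lt_of_le hlt (hmax hy hlt.le))⟩
        have hq₂ne : g q₂ ≠ 0 := (Finset.mem_filter.1 hq₂).2
        have hq₂le : ∀ q, g q ≠ 0 → q.1 ⊆ q₂.1 := by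
          intro q hq
          rcases hgch q q₂ hq hq₂ne with h | h
          · exact h
          · have hle' : q₂ ≤ q := h
            rcases eq_or_lt_of_le hle' with he | hlt
            · rw [← he]
            · exact absurd hlt (hq₂max q (Finset.mem_filter.2 ⟨Finset.mem_univ _, hq⟩))
        have hss : q₂.1 ⊂ pm.1 :=
          ssubset_of_subset_of_ne (hle q₂ (hgsupp q₂ hq₂ne).1)
            (fun h => (hgsupp q₂ hq₂ne).2 (Subtype.ext h))
        obtain ⟨v₀, hv₀m, hv₀n⟩ := Finset.exists_of_ssubset hss
        refine ⟨v₀, hv₀m, ?_⟩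
        by_contra h
        obtain ⟨p, hp, hvp⟩ := beta_support h
        exact hv₀n (hq₂le p hp hvp)
      · obtain ⟨v₀, hm⟩ := hKne pm.1 pm.2
        refine ⟨v₀, hm, ?_⟩
        apply Finset.sum_eq_zero
        intro p _
        have : g p = 0 := by
          by_contra h
          exact hs' ⟨p, Finset.mem_filter.2 ⟨Finset.mem_univ _, h⟩⟩
        simp [this]
    obtain ⟨v₀, hv₀m, hv₀z⟩ := hv₀
    funext p
    by_cases hp : p = pm
    · subst hp
      have h1 : smn p.1 (beta K x) = c / (p.1.card : ℝ) := by
        have he : smn p.1 (beta K x) = smn p.1 (fun v => beta K g v + c / (p.1.card : ℝ)) :=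
          smn_congr fun v hv => by rw [hyd v, if_pos hv]
        rw [he, smn_shift (hKne p.1 p.2)]
        have h0 : smn p.1 (beta K g) = 0 :=
          le_antisymm (le_trans (smn_le hv₀m) (le_of_eq hv₀z))
            (smn_nonneg fun v _ => hy'0 v)
        rw [h0, zero_add]
      have h2 : smx p.1ᶜ (beta K x) = 0 := by
        apply smx_eq_zero
        intro v hv
        have hv' : v ∉ p.1 := by simpa using hv
        rw [hyd v, if_neg hv', hy'supp v hv', add_zero]
      rw [iota, hgap, h1, h2, sub_zero, max_eq_left (by positivity),
        mul_div_cancel₀ _ hn₀.ne']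
    · by_cases hsub : p.1 ⊆ pm.1
      · have hss : p.1 ⊂ pm.1 :=
          ssubset_of_subset_of_ne hsub (fun h => hp (Subtype.ext h))
        have hD : (pm.1 \ p.1).Nonempty := by
          rw [Finset.sdiff_nonempty]
          exact fun h => hss.2 h
        have hpne := hKne p.1 p.2
        have h1 : smn p.1 (beta K x) = smn p.1 (beta K g) + c / (pm.1.card : ℝ) := by
          have he : smn p.1 (beta K x) = smn p.1 (fun v => beta K g v + c / (pm.1.card : ℝ)) :=
            smn_congr fun v hv => by rw [hyd v, if_pos (hsub hv)]
          rw [he, smn_shift hpne]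
        have hDsub : pm.1 \ p.1 ⊆ p.1ᶜ := by
          intro v hv
          simpa using (Finset.mem_sdiff.1 hv).2
        have hzero : ∀ v ∈ p.1ᶜ, v ∉ pm.1 \ p.1 → beta K x v = 0 := by
          intro v hv hvD
          have hvp : v ∉ p.1 := by simpa using hv
          have hvpm : v ∉ pm.1 := fun h => hvD (Finset.mem_sdiff.2 ⟨h, hvp⟩)
          rw [hyd v, if_neg hvpm, hy'supp v hvpm, add_zero]
        have hzero' : ∀ v ∈ p.1ᶜ, v ∉ pm.1 \ p.1 → beta K g v = 0 := by
          intro v hv hvD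
          have hvp : v ∉ p.1 := by simpa using hv
          have hvpm : v ∉ pm.1 := fun h => hvD (Finset.mem_sdiff.2 ⟨h, hvp⟩)
          exact hy'supp v hvpm
        have h2 : smx p.1ᶜ (beta K x) = smx p.1ᶜ (beta K g) + c / (pm.1.card : ℝ) := by
          have e1 : smx p.1ᶜ (beta K x) = smx (pm.1 \ p.1) (beta K x) :=
            smx_congr_zero hDsub hzero (beta_nonneg hx0)
          have e2 : smx (pm.1 \ p.1) (beta K x)
              = smx (pm.1 \ p.1) (fun v => beta K g v + c / (pm.1.card : ℝ)) :=
            smx_congr fun v hv => by rw [hyd v, if_pos (Finset.mem_sdiff.1 hv).1]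
          have e3 : smx (pm.1 \ p.1) (fun v => beta K g v + c / (pm.1.card : ℝ))
              = smx (pm.1 \ p.1) (beta K g) + c / (pm.1.card : ℝ) :=
            smx_shift hD (fun v _ => hy'0 v) (by positivity)
          have e4 : smx (pm.1 \ p.1) (beta K g) = smx p.1ᶜ (beta K g) :=
            (smx_congr_zero hDsub hzero' hy'0).symm
          rw [e1, e2, e3, e4]
        have hgapeq : hgap (beta K x) p.1 = hgap (beta K g) p.1 := by
          rw [hgap, hgap, h1, h2]
          ring_nf
        have : iota K (beta K x) p = iota K (beta K g) p := by
          rw [iota, iota, hgapeq]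
        rw [this, IH, hgval p hp]
      · obtain ⟨v₁, hv₁p, hv₁pm⟩ := Finset.not_subset.1 hsub
        have hyv₁ : beta K x v₁ = 0 := by
          rw [hyd v₁, if_neg hv₁pm, hy'supp v₁ hv₁pm, add_zero]
        have hxp : x p = 0 := by
          by_contra h
          exact hv₁pm (hle p h hv₁p)
        have hnp : smn p.1 (beta K x) ≤ smx p.1ᶜ (beta K x) := by
          calc smn p.1 (beta K x) ≤ beta K x v₁ := smn_le hv₁p
            _ = 0 := hyv₁
            _ ≤ smx p.1ᶜ (beta K x) := smx_nonneg _ _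
        rw [iota, hgap_eq_of_nonpos hnp, mul_zero, hxp]

end Inverse

section Inverse2
variable {A : Type*} [Fintype A] {K : Set (Finset A)}

lemma beta_iota_zero (hKne : ∀ σ ∈ K, σ.Nonempty) {y : A → ℝ}
    (hy : ∀ v, y v = 0) : beta K (iota K y) = y := by
  have hi : ∀ p, iota K y p = 0 := by
    intro p
    have h1 : smn p.1 y = 0 := by
      apply le_antisymm
      · obtain ⟨v, hv⟩ := hKne p.1 p.2
        calc smn p.1 y ≤ y v := smn_le hv
          _ = 0 := hy v
      · exact smn_nonneg fun v _ => (hy v).ge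
    have h2 : smx p.1ᶜ y = 0 := smx_eq_zero fun v _ => hy v
    rw [iota, hgap, h1, h2]
    simp
  funext v
  rw [hy v]
  apply Finset.sum_eq_zero
  intro p _
  simp [hi p]

lemma beta_iota (hKne : ∀ σ ∈ K, σ.Nonempty)
    (hdc : ∀ σ ∈ K, ∀ τ, τ ⊆ σ → τ.Nonempty → τ ∈ K)
    (y : A → ℝ) (hy0 : ∀ v, 0 ≤ y v)
    (hsupp : ∃ σ ∈ K, ∀ v, y v ≠ 0 → v ∈ σ) :
    beta K (iota K y) = y := by
  suffices h : ∀ (n : ℕ) (y : A → ℝ), (∀ v, 0 ≤ y v) →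
      (∃ σ ∈ K, ∀ v, y v ≠ 0 → v ∈ σ) →
      ((Finset.univ.filter (fun v => y v ≠ 0)).image y).card ≤ n →
      beta K (iota K y) = y by
    exact h _ y hy0 hsupp le_rfl
  clear hy0 hsupp y
  intro n
  induction n with
  | zero =>
    intro y _ _ hcard
    apply beta_iota_zero hKne
    intro v
    by_contra hv
    have hm : v ∈ Finset.univ.filter (fun v => y v ≠ 0) :=
      Finset.mem_filter.2 ⟨Finset.mem_univ _, hv⟩
    have : y v ∈ (Finset.univ.filter (fun v => y v ≠ 0)).image y :=
      Finset.mem_image_of_mem y hm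
    have := Finset.card_pos.2 ⟨y v, this⟩
    omega
  | succ n ih =>
    intro y hy0 hsupp hcard
    set s := Finset.univ.filter (fun v => y v ≠ 0) with hs_def
    by_cases hs : s.Nonempty
    swap
    · apply beta_iota_zero hKne
      intro v
      by_contra hv
      exact hs ⟨v, Finset.mem_filter.2 ⟨Finset.mem_univ _, hv⟩⟩
    have hssupp : ∀ v, y v ≠ 0 → v ∈ s := fun v hv =>
      Finset.mem_filter.2 ⟨Finset.mem_univ _, hv⟩
    have hsy : ∀ v, v ∉ s → y v = 0 := by
      intro v hv
      by_contra h
      exact hv (hssupp v h)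
    set m := smn s y with hm_def
    obtain ⟨v₀, hv₀s, hv₀⟩ := smn_exists hs y
    have hmpos : 0 < m := by
      rw [hm_def, hv₀]
      exact lt_of_le_of_ne (hy0 v₀) (Ne.symm (Finset.mem_filter.1 hv₀s).2)
    have hsK : s ∈ K := by
      obtain ⟨σ, hσK, hσ⟩ := hsupp
      exact hdc σ hσK s (fun v hv => hσ v (Finset.mem_filter.1 hv).2) hs
    set ps : {σ : Finset A // σ ∈ K} := ⟨s, hsK⟩ with hps_def
    set y' := fun v => y v - (if v ∈ s then m else 0) with hy'_def
    have hy'v : ∀ v ∈ s, y' v = y v - m := fun v hv => by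
      rw [hy'_def]; simp only; rw [if_pos hv]
    have hy'vn : ∀ v, v ∉ s → y' v = 0 := by
      intro v hv
      rw [hy'_def]; simp only; rw [if_neg hv, sub_zero, hsy v hv]
    have hy'0 : ∀ v, 0 ≤ y' v := by
      intro v
      by_cases hv : v ∈ s
      · rw [hy'v v hv, sub_nonneg]; exact smn_le hv
      · rw [hy'vn v hv]
    have hy'supp : ∀ v, y' v ≠ 0 → v ∈ s := by
      intro v hv
      by_contra h
      exact hv (hy'vn v h)
    have hcard' : ((Finset.univ.filter (fun v => y' v ≠ 0)).image y').card ≤ n := by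
      have hsub : (Finset.univ.filter (fun v => y' v ≠ 0)).image y'
          ⊆ (((Finset.univ.filter (fun v => y v ≠ 0)).image y).erase m).image (· - m) := by
        intro t ht
        obtain ⟨v, hv, rfl⟩ := Finset.mem_image.1 ht
        have hv' : y' v ≠ 0 := (Finset.mem_filter.1 hv).2
        have hvs : v ∈ s := hy'supp v hv'
        have hyv : y' v = y v - m := hy'v v hvs
        apply Finset.mem_image.2
        refine ⟨y v, ?_, by rw [hyv]⟩
        apply Finset.mem_erase.2
        refine ⟨?_, Finset.mem_image_of_mem y (hs_def ▸ hvs)⟩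
        intro he
        rw [hyv, he, sub_self] at hv'
        exact hv' rfl
      have h1 := Finset.card_le_card hsub
      have h2 := Finset.card_image_le
        (s := ((Finset.univ.filter (fun v => y v ≠ 0)).image y).erase m) (f := (· - m))
      have hmmem : m ∈ (Finset.univ.filter (fun v => y v ≠ 0)).image y := by
        rw [hm_def, hv₀]
        exact Finset.mem_image_of_mem y (hs_def ▸ hv₀s)
      have h3 := Finset.card_erase_of_mem hmmem
      rw [← hs_def] at h1 h2 h3
      omega
    have IH := ih y' hy'0 ⟨s, hsK, hy'supp⟩ hcard'
    have hbullet : ∀ p : {σ : Finset A // σ ∈ K},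
        hgap y p.1 = hgap y' p.1 + (if p.1 = s then m else 0) := by
      intro p
      by_cases hps : p.1 = s
      · rw [if_pos hps, hps]
        have h1 : smn s y = m := hm_def.symm
        have h2 : smx sᶜ y = 0 := smx_eq_zero fun v hv => hsy v (by simpa using hv)
        have h3 : smn s y' = 0 := by
          have he : smn s y' = smn s (fun v => y v + (-m)) :=
            smn_congr fun v hv => by rw [hy'v v hv]; ring
          rw [he, smn_shift hs, ← hm_def]
          ring
        have h4 : hgap y' s = 0 :=
          hgap_eq_of_nonpos (by rw [h3]; exact smx_nonneg _ _)
        rw [hgap, h1, h2, sub_zero, max_eq_left hmpos.le, h4, zero_add]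
      · rw [if_neg hps, add_zero]
        by_cases hsub : p.1 ⊆ s
        · have hss : p.1 ⊂ s := ssubset_of_subset_of_ne hsub hps
          have hD : (s \ p.1).Nonempty := by
            rw [Finset.sdiff_nonempty]
            exact fun h => hss.2 h
          have hpne := hKne p.1 p.2
          have h1 : smn p.1 y = smn p.1 y' + m := by
            have he : smn p.1 y = smn p.1 (fun v => y' v + m) :=
              smn_congr fun v hv => by rw [hy'v v (hsub hv)]; ring
            rw [he, smn_shift hpne]
          have hDsub : s \ p.1 ⊆ p.1ᶜ := by
            intro v hv
            simpa using (Finset.mem_sdiff.1 hv).2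
          have hzero : ∀ v ∈ p.1ᶜ, v ∉ s \ p.1 → y v = 0 := by
            intro v hv hvD
            have hvp : v ∉ p.1 := by simpa using hv
            exact hsy v (fun h => hvD (Finset.mem_sdiff.2 ⟨h, hvp⟩))
          have hzero' : ∀ v ∈ p.1ᶜ, v ∉ s \ p.1 → y' v = 0 := by
            intro v hv hvD
            have hvp : v ∉ p.1 := by simpa using hv
            exact hy'vn v (fun h => hvD (Finset.mem_sdiff.2 ⟨h, hvp⟩))
          have h2 : smx p.1ᶜ y = smx p.1ᶜ y' + m := by
            have e1 : smx p.1ᶜ y = smx (s \ p.1) y := smx_congr_zero hDsub hzero hy0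
            have e2 : smx (s \ p.1) y = smx (s \ p.1) (fun v => y' v + m) :=
              smx_congr fun v hv => by rw [hy'v v (Finset.mem_sdiff.1 hv).1]; ring
            have e3 : smx (s \ p.1) (fun v => y' v + m) = smx (s \ p.1) y' + m :=
              smx_shift hD (fun v _ => hy'0 v) hmpos.le
            have e4 : smx (s \ p.1) y' = smx p.1ᶜ y' :=
              (smx_congr_zero hDsub hzero' hy'0).symm
            rw [e1, e2, e3, e4]
          rw [hgap, hgap, h1, h2]
          ring_nf
        · obtain ⟨v₁, hv₁p, hv₁s⟩ := Finset.not_subset.1 hsub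
          have hyv₁ : y v₁ = 0 := hsy v₁ hv₁s
          have hy'v₁ : y' v₁ = 0 := hy'vn v₁ hv₁s
          have g1 : hgap y p.1 = 0 := by
            apply hgap_eq_of_nonpos
            calc smn p.1 y ≤ y v₁ := smn_le hv₁p
              _ = 0 := hyv₁
              _ ≤ smx p.1ᶜ y := smx_nonneg _ _
          have g2 : hgap y' p.1 = 0 := by
            apply hgap_eq_of_nonpos
            calc smn p.1 y' ≤ y' v₁ := smn_le hv₁p
              _ = 0 := hy'v₁
              _ ≤ smx p.1ᶜ y' := smx_nonneg _ _
          rw [g1, g2]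
    have hiota : iota K y = fun p => iota K y' p
        + (if p = ps then ((s.card : ℝ) * m) else 0) := by
      funext p
      rw [iota, iota, hbullet p, mul_add]
      congr 1
      by_cases hp : p = ps
      · rw [if_pos hp, if_pos (by rw [hp]), hp]
      · rw [if_neg hp, if_neg (fun h => hp (Subtype.ext h)), mul_zero]
    have hscard : ((s.card : ℝ)) ≠ 0 := by
      exact_mod_cast (Finset.card_pos.2 hs).ne'
    funext v
    rw [hiota]
    calc beta K (fun p => iota K y' p + (if p = ps then ((s.card : ℝ) * m) else 0)) v
        = beta K (iota K y') v
          + beta K (fun p => if p = ps then ((s.card : ℝ) * m) else 0) v := beta_add _ _ _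
      _ = y' v + (if v ∈ s then ((s.card : ℝ) * m) / (s.card : ℝ) else 0) := by
          rw [IH, beta_single]
      _ = y v := by
          by_cases hv : v ∈ s
          · rw [if_pos hv, hy'v v hv, mul_comm, mul_div_assoc, div_self hscard, mul_one]
            ring
          · rw [if_neg hv, hy'vn v hv, hsy v hv, add_zero]

end Inverse2

section SubdivHomeo
variable {A : Type*} [Fintype A] {K : Set (Finset A)}

lemma beta_mem (hKne : ∀ σ ∈ K, σ.Nonempty)
    {x : {σ : Finset A // σ ∈ K} → ℝ}
    (hx : x ∈ geomReal (orderCx {σ : Finset A // σ ∈ K})) :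
    beta K x ∈ geomReal K := by
  obtain ⟨hx0, c, ⟨hcne, hchain⟩, hsuppc, hsum⟩ := hx
  obtain ⟨pm, hpm, hpmax⟩ : ∃ m ∈ c, ∀ y ∈ c, ¬ m < y :=
    (Finset.exists_maximal hcne).elim fun i ⟨hi, hmax⟩ =>
      ⟨i, hi, fun y hy hlt => lt_irrefl _ (lt_of_lt_of_le hlt (hmax hy hlt.le))⟩
  have hle : ∀ q ∈ c, q.1 ⊆ pm.1 := by
    intro q hq
    rcases hchain q hq pm hpm with h | h
    · exact h
    · rcases eq_or_lt_of_le h with he | hlt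
      · rw [he]
      · exact absurd hlt (hpmax q hq)
  refine ⟨beta_nonneg hx0, pm.1, pm.2, ?_, ?_⟩
  · intro v hv
    obtain ⟨p, hp, hvp⟩ := beta_support hv
    exact hle p (hsuppc p hp) hvp
  · rw [sum_beta hKne x pm.1 (fun p hp => hle p (hsuppc p hp)),
      ← sum_univ_of_support hsuppc, hsum]

lemma iota_mem (hKne : ∀ σ ∈ K, σ.Nonempty)
    (hdc : ∀ σ ∈ K, ∀ τ, τ ⊆ σ → τ.Nonempty → τ ∈ K)
    {y : A → ℝ} (hy : y ∈ geomReal K) :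
    iota K y ∈ geomReal (orderCx {σ : Finset A // σ ∈ K}) := by
  obtain ⟨hy0, σy, hσK, hsupp, hsum⟩ := hy
  have hbi : beta K (iota K y) = y := beta_iota hKne hdc y hy0 ⟨σy, hσK, hsupp⟩
  set τ := Finset.univ.filter (fun p : {σ : Finset A // σ ∈ K} => iota K y p ≠ 0) with hτ_def
  have hτmem : ∀ p, iota K y p ≠ 0 → p ∈ τ := fun p hp =>
    Finset.mem_filter.2 ⟨Finset.mem_univ _, hp⟩
  have hgapne : ∀ p ∈ τ, hgap y p.1 ≠ 0 := by
    intro p hp h0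
    have := (Finset.mem_filter.1 hp).2
    rw [iota, h0, mul_zero] at this
    exact this rfl
  have hsumτ : ∑ p ∈ τ, iota K y p = 1 := by
    rw [sum_univ_of_support hτmem]
    rw [← sum_beta hKne (iota K y) Finset.univ (fun p _ => Finset.subset_univ _)]
    rw [hbi]
    rw [← sum_univ_of_support hsupp, hsum]
  refine ⟨iota_nonneg y, τ, ⟨?_, ?_⟩, hτmem, hsumτ⟩
  · exact Finset.nonempty_of_sum_ne_zero (f := iota K y) (by rw [hsumτ]; exact one_ne_zero)
  · intro p hp q hq
    exact hgap_chain (hgapne p hp) (hgapne q hq)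

/-- The subdivision homeomorphism. -/
def subdivHomeo (hKne : ∀ σ ∈ K, σ.Nonempty)
    (hdc : ∀ σ ∈ K, ∀ τ, τ ⊆ σ → τ.Nonempty → τ ∈ K) :
    ↥(geomReal (orderCx {σ : Finset A // σ ∈ K})) ≃ₜ ↥(geomReal K) where
  toFun x := ⟨beta K x.1, beta_mem hKne x.2⟩
  invFun y := ⟨iota K y.1, iota_mem hKne hdc y.2⟩
  left_inv x := by
    apply Subtype.ext
    obtain ⟨hx0, c, ⟨hcne, hchain⟩, hsuppc, hsum⟩ := x.2
    exact iota_beta hKne x.1 hx0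
      (fun p q hp hq => hchain p (hsuppc p hp) q (hsuppc q hq))
  right_inv y := by
    apply Subtype.ext
    obtain ⟨hy0, σy, hσK, hsupp, hsum⟩ := y.2
    exact beta_iota hKne hdc y.1 hy0 ⟨σy, hσK, hsupp⟩
  continuous_toFun := Continuous.subtype_mk (continuous_beta.comp continuous_subtype_val) _
  continuous_invFun := Continuous.subtype_mk (continuous_iota.comp continuous_subtype_val) _

end SubdivHomeo

section Prism
variable {P : Type*} {Q : Type*} [Fintype P] [Fintype Q] [PartialOrder P] [PartialOrder Q]

def cmass (x : P → ℝ) (p : P) : ℝ := ∑ q ∈ Finset.univ.filter (fun q => p < q), x q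

def aa (t : ℝ) (x : P → ℝ) (p : P) : ℝ := min (max (t - cmass x p) 0) (x p)

def hmap (f g : P → Q) (t : ℝ) (x : P → ℝ) : Q → ℝ :=
  fun q => ∑ p, ((if g p = q then aa t x p else 0)
    + (if f p = q then x p - aa t x p else 0))

lemma cmass_nonneg {x : P → ℝ} (hx0 : ∀ p, 0 ≤ x p) (p : P) : 0 ≤ cmass x p :=
  Finset.sum_nonneg fun q _ => hx0 q

lemma aa_nonneg {x : P → ℝ} (hx0 : ∀ p, 0 ≤ x p) (t : ℝ) (p : P) : 0 ≤ aa t x p :=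
  le_min (le_max_right _ _) (hx0 p)

lemma aa_le (t : ℝ) (x : P → ℝ) (p : P) : aa t x p ≤ x p := min_le_right _ _

lemma aa_of_x_eq_zero {x : P → ℝ} (hx0 : ∀ p, 0 ≤ x p) {t : ℝ} {p : P}
    (h : x p = 0) : aa t x p = 0 :=
  le_antisymm (h ▸ aa_le t x p) (aa_nonneg hx0 t p)

lemma cmass_lt {x : P → ℝ} (hx0 : ∀ p, 0 ≤ x p) {p p' : P} (h : p' < p) :
    x p + cmass x p ≤ cmass x p' := by
  have hsub : insert p (Finset.univ.filter (fun q => p < q))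
      ⊆ Finset.univ.filter (fun q => p' < q) := by
    intro q hq
    rcases Finset.mem_insert.1 hq with rfl | hq'
    · exact Finset.mem_filter.2 ⟨Finset.mem_univ _, h⟩
    · exact Finset.mem_filter.2 ⟨Finset.mem_univ _,
        lt_trans h (Finset.mem_filter.1 hq').2⟩
  have hpni : p ∉ Finset.univ.filter (fun q => p < q) := by
    simp [lt_irrefl]
  calc x p + cmass x p = ∑ q ∈ insert p (Finset.univ.filter (fun q => p < q)), x q := by
        rw [Finset.sum_insert hpni, cmass]
    _ ≤ cmass x p' := Finset.sum_le_sum_of_subset_of_nonneg hsub (fun q _ _ => hx0 q)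

/-- key comparability in the prism. -/
lemma prism_key {f g : P → Q} (hf : Monotone f) (hg : Monotone g) (hfg : ∀ p, f p ≤ g p)
    {x : P → ℝ} (hx0 : ∀ p, 0 ≤ x p) {t : ℝ} {p p' : P}
    (hb : x p - aa t x p ≠ 0) (ha : aa t x p' ≠ 0)
    (hcomp : p ≤ p' ∨ p' ≤ p) : f p ≤ g p' := by
  have h1 : t - cmass x p < x p := by
    by_contra hcon
    push_neg at hcon
    have : aa t x p = x p := by
      rw [aa, min_eq_right]
      exact le_max_of_le_left hcon
    rw [this, sub_self] at hb
    exact hb rfl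
  have h2 : cmass x p' < t := by
    by_contra hcon
    push_neg at hcon
    have : aa t x p' = 0 := by
      rw [aa, max_eq_right (by linarith), min_eq_left (hx0 p')]
    exact ha this
  have hple : p ≤ p' := by
    rcases hcomp with h | h
    · exact h
    · rcases eq_or_lt_of_le h with he | hlt
      · exact le_of_eq he.symm
      · have := cmass_lt hx0 hlt
        linarith
  exact le_trans (hf hple) (hfg p')

lemma hmap_mem {f g : P → Q} (hf : Monotone f) (hg : Monotone g) (hfg : ∀ p, f p ≤ g p)
    {x : P → ℝ} (hx : x ∈ geomReal (orderCx P)) (t : ℝ) :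
    hmap f g t x ∈ geomReal (orderCx Q) := by
  obtain ⟨hx0, σ, ⟨hσne, hchain⟩, hsupp, hsum⟩ := hx
  have hb0 : ∀ p, 0 ≤ x p - aa t x p := fun p => sub_nonneg.2 (aa_le t x p)
  have ha0 : ∀ p, 0 ≤ aa t x p := aa_nonneg hx0 t
  have hbx : ∀ p, x p - aa t x p ≠ 0 → x p ≠ 0 := by
    intro p h hx'
    rw [hx', aa_of_x_eq_zero hx0 hx', sub_self] at h
    exact h rfl
  have hax : ∀ p, aa t x p ≠ 0 → x p ≠ 0 := by
    intro p h hx'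
    exact h (aa_of_x_eq_zero hx0 hx')
  set τ := ((Finset.univ.filter fun p => x p - aa t x p ≠ 0).image f)
    ∪ ((Finset.univ.filter fun p => aa t x p ≠ 0).image g) with hτ_def
  have hcompσ : ∀ p p', x p ≠ 0 → x p' ≠ 0 → p ≤ p' ∨ p' ≤ p := fun p p' hp hp' =>
    hchain p (hsupp p hp) p' (hsupp p' hp')
  have hfτ : ∀ p, x p - aa t x p ≠ 0 → f p ∈ τ := fun p hp =>
    Finset.mem_union_left _ (Finset.mem_image_of_mem f
      (Finset.mem_filter.2 ⟨Finset.mem_univ _, hp⟩))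
  have hgτ : ∀ p, aa t x p ≠ 0 → g p ∈ τ := fun p hp =>
    Finset.mem_union_right _ (Finset.mem_image_of_mem g
      (Finset.mem_filter.2 ⟨Finset.mem_univ _, hp⟩))
  have hchainτ : ∀ q ∈ τ, ∀ q' ∈ τ, q ≤ q' ∨ q' ≤ q := by
    intro q hq q' hq'
    rw [hτ_def] at hq hq'
    rcases Finset.mem_union.1 hq with h | h <;> rcases Finset.mem_union.1 hq' with h' | h'
    · obtain ⟨p, hp, rfl⟩ := Finset.mem_image.1 h
      obtain ⟨p', hp', rfl⟩ := Finset.mem_image.1 h'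
      have c1 := hbx p (Finset.mem_filter.1 hp).2
      have c2 := hbx p' (Finset.mem_filter.1 hp').2
      rcases hcompσ p p' c1 c2 with hc | hc
      · exact Or.inl (hf hc)
      · exact Or.inr (hf hc)
    · obtain ⟨p, hp, rfl⟩ := Finset.mem_image.1 h
      obtain ⟨p', hp', rfl⟩ := Finset.mem_image.1 h'
      exact Or.inl (prism_key hf hg hfg hx0 (Finset.mem_filter.1 hp).2
        (Finset.mem_filter.1 hp').2
        (hcompσ p p' (hbx p (Finset.mem_filter.1 hp).2) (hax p' (Finset.mem_filter.1 hp').2)))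
    · obtain ⟨p, hp, rfl⟩ := Finset.mem_image.1 h
      obtain ⟨p', hp', rfl⟩ := Finset.mem_image.1 h'
      exact Or.inr (prism_key hf hg hfg hx0 (Finset.mem_filter.1 hp').2
        (Finset.mem_filter.1 hp).2
        (hcompσ p' p (hbx p' (Finset.mem_filter.1 hp').2) (hax p (Finset.mem_filter.1 hp).2)))
    · obtain ⟨p, hp, rfl⟩ := Finset.mem_image.1 h
      obtain ⟨p', hp', rfl⟩ := Finset.mem_image.1 h'
      have c1 := hax p (Finset.mem_filter.1 hp).2
      have c2 := hax p' (Finset.mem_filter.1 hp').2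
      rcases hcompσ p p' c1 c2 with hc | hc
      · exact Or.inl (hg hc)
      · exact Or.inr (hg hc)
  have hsumτ : ∑ q ∈ τ, hmap f g t x q = 1 := by
    unfold hmap
    rw [Finset.sum_comm]
    have : ∀ p ∈ Finset.univ, (∑ q ∈ τ, ((if g p = q then aa t x p else 0)
        + (if f p = q then x p - aa t x p else 0))) = x p := by
      intro p _
      rw [Finset.sum_add_distrib, Finset.sum_ite_eq, Finset.sum_ite_eq]
      by_cases h1 : aa t x p = 0
      · by_cases h2 : x p - aa t x p = 0
        · rw [h1] at h2 ⊢
          rw [sub_zero] at h2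
          simp [h2]
        · rw [if_pos (hfτ p h2), h1]
          simp
      · by_cases h2 : x p - aa t x p = 0
        · have h3 : aa t x p = x p := by linarith
          rw [if_pos (hgτ p h1), h3]
          split <;> simp
        · rw [if_pos (hfτ p h2), if_pos (hgτ p h1)]
          ring
    rw [Finset.sum_congr rfl this, ← sum_univ_of_support hsupp, hsum]
  refine ⟨?_, τ, ⟨?_, hchainτ⟩, ?_, hsumτ⟩
  · intro q
    refine Finset.sum_nonneg fun p _ => add_nonneg ?_ ?_
    · split
      · exact ha0 p
      · exact le_rfl
    · split
      · exact hb0 p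
      · exact le_rfl
  · exact Finset.nonempty_of_sum_ne_zero (by rw [hsumτ]; exact one_ne_zero)
  · intro q hq
    have := Finset.exists_ne_zero_of_sum_ne_zero hq
    obtain ⟨p, _, hp⟩ := this
    by_cases h1 : (if g p = q then aa t x p else 0) = 0
    · have h2 : (if f p = q then x p - aa t x p else 0) ≠ 0 := by
        intro h2
        rw [h1, h2, add_zero] at hp
        exact hp rfl
      split at h2
      · rename_i he; exact he ▸ hfτ p h2
      · exact absurd rfl h2
    · split at h1
      · rename_i he; exact he ▸ hgτ p h1
      · exact absurd rfl h1

lemma hmap_zero {f g : P → Q} {x : P → ℝ} (hx0 : ∀ p, 0 ≤ x p) :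
    hmap f g 0 x = push f x := by
  funext q
  unfold hmap push
  refine Finset.sum_congr rfl fun p _ => ?_
  have ha : aa 0 x p = 0 := by
    rw [aa, zero_sub, max_eq_right (by linarith [cmass_nonneg hx0 p]),
      min_eq_left (hx0 p)]
  rw [ha]
  by_cases h1 : g p = q <;> by_cases h2 : f p = q <;> simp [h1, h2]

lemma hmap_one {f g : P → Q} {x : P → ℝ}
    (hx : x ∈ geomReal (orderCx P)) : hmap f g 1 x = push g x := by
  obtain ⟨hx0, σ, ⟨hσne, hchain⟩, hsupp, hsum⟩ := hx
  funext q
  unfold hmap push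
  refine Finset.sum_congr rfl fun p _ => ?_
  have ha : aa 1 x p = x p := by
    by_cases hxp : x p = 0
    · rw [aa_of_x_eq_zero hx0 hxp, hxp]
    · have hcb : cmass x p + x p ≤ 1 := by
        have he : cmass x p = ∑ q ∈ σ.filter (fun q => p < q), x q := by
          unfold cmass
          symm
          apply Finset.sum_subset
          · exact Finset.filter_subset_filter _ (Finset.subset_univ σ)
          · intro q hq hq'
            by_contra hxq
            exact hq' (Finset.mem_filter.2 ⟨hsupp q hxq, (Finset.mem_filter.1 hq).2⟩)
        have hpins : p ∉ σ.filter (fun q => p < q) := by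
          simp [lt_irrefl]
        have hins : insert p (σ.filter (fun q => p < q)) ⊆ σ := by
          intro q hq
          rcases Finset.mem_insert.1 hq with h | hq'
          · exact h ▸ hsupp p hxp
          · exact Finset.filter_subset _ _ hq'
        calc cmass x p + x p = ∑ q ∈ insert p (σ.filter (fun q => p < q)), x q := by
              rw [Finset.sum_insert hpins, he]; ring
          _ ≤ ∑ q ∈ σ, x q := Finset.sum_le_sum_of_subset_of_nonneg hins (fun q _ _ => hx0 q)
          _ = 1 := hsum
      rw [aa, min_eq_right]
      exact le_max_of_le_left (by linarith)
  rw [ha]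
  by_cases h1 : g p = q <;> by_cases h2 : f p = q <;> simp [h1, h2]

lemma continuous_hmap (f g : P → Q) :
    Continuous (fun z : (P → ℝ) × ℝ => hmap f g z.2 z.1) := by
  apply continuous_pi
  intro q
  apply continuous_finset_sum
  intro p _
  have hx : Continuous (fun z : (P → ℝ) × ℝ => z.1 p) :=
    (continuous_apply p).comp continuous_fst
  have hcm : Continuous (fun z : (P → ℝ) × ℝ => cmass z.1 p) := by
    unfold cmass
    apply continuous_finset_sum
    intro r _
    exact (continuous_apply r).comp continuous_fst
  have haa : Continuous (fun z : (P → ℝ) × ℝ => aa z.2 z.1 p) := by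
    unfold aa
    exact Continuous.min ((continuous_snd.sub hcm).max continuous_const) hx
  apply Continuous.add
  · by_cases h : g p = q
    · simpa [hmap, h] using haa
    · simp only [h, if_false]
      exact continuous_const
  · by_cases h : f p = q
    · simp only [if_pos h]
      exact hx.sub haa
    · simp only [h, if_false]
      exact continuous_const

end Prism

section Assemble
variable {P Q : Type*} [Fintype P] [Fintype Q] [PartialOrder P] [PartialOrder Q]

def CompPres (f : P → Q) : Prop :=
  ∀ p p', (p ≤ p' ∨ p' ≤ p) → (f p ≤ f p' ∨ f p' ≤ f p)

lemma monoCompPres {f : P → Q} (hf : Monotone f) : CompPres f := by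
  intro p p' h
  rcases h with h | h
  · exact Or.inl (hf h)
  · exact Or.inr (hf h)

lemma antiCompPres {f : P → Q} (hf : Antitone f) : CompPres f := by
  intro p p' h
  rcases h with h | h
  · exact Or.inr (hf h)
  · exact Or.inl (hf h)

lemma orderCx_image {f : P → Q} (hcomp : CompPres f) :
    ∀ σ ∈ orderCx P, σ.image f ∈ orderCx Q := by
  intro σ hσ
  obtain ⟨hne, hch⟩ := hσ
  refine ⟨hne.image f, ?_⟩
  intro q hq q' hq'
  obtain ⟨p, hp, rfl⟩ := Finset.mem_image.1 hq
  obtain ⟨p', hp', rfl⟩ := Finset.mem_image.1 hq'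
  exact hcomp p p' (hch p hp p' hp')

/-- Bundled continuous map on realizations induced by a comparability preserving map. -/
def pushC (f : P → Q) (hcomp : CompPres f) :
    C(↥(geomReal (orderCx P)), ↥(geomReal (orderCx Q))) :=
  ⟨fun x => ⟨push f x.1, push_mem_geomReal f _ _ (orderCx_image hcomp) x.2⟩,
   Continuous.subtype_mk ((continuous_push f).comp continuous_subtype_val) _⟩

/-- The prism homotopy between the maps induced by comparable monotone maps. -/
def prismHt (f g : P → Q) (hf : Monotone f) (hg : Monotone g) (hfg : ∀ p, f p ≤ g p) :
    ContinuousMap.Homotopy (pushC f (monoCompPres hf)) (pushC g (monoCompPres hg)) where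
  toFun := fun z => ⟨hmap f g (z.1 : ℝ) z.2.1,
    hmap_mem hf hg hfg z.2.2 (z.1 : ℝ)⟩
  continuous_toFun := by
    apply Continuous.subtype_mk
    exact (continuous_hmap f g).comp
      ((continuous_subtype_val.comp continuous_snd).prodMk
        (continuous_subtype_val.comp continuous_fst))
  map_zero_left := by
    intro x
    apply Subtype.ext
    simp only [Set.Icc.coe_zero]
    exact hmap_zero x.2.1
  map_one_left := by
    intro x
    apply Subtype.ext
    simp only [Set.Icc.coe_one]
    exact hmap_one x.2

lemma pushC_comp {R : Type*} [Fintype R] [PartialOrder R]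
    (f : P → Q) (hf : CompPres f) (g : Q → R) (hg : CompPres g) (hgf : CompPres (g ∘ f)) :
    (pushC g hg).comp (pushC f hf) = pushC (g ∘ f) hgf := by
  apply ContinuousMap.ext
  intro x
  apply Subtype.ext
  exact push_push f g x.1

lemma pushC_id :
    pushC (id : P → P) (monoCompPres monotone_id) = ContinuousMap.id _ := by
  apply ContinuousMap.ext
  intro x
  apply Subtype.ext
  exact push_id x.1

/-- A Galois-type pair of antitone maps induces a homotopy equivalence
between the realizations of the order complexes. -/
def galoisHE (F : P → Q) (G : Q → P) (hF : Antitone F) (hG : Antitone G)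
    (hGF : ∀ p, p ≤ G (F p)) (hFG : ∀ q, q ≤ F (G q)) :
    ContinuousMap.HomotopyEquiv ↥(geomReal (orderCx P)) ↥(geomReal (orderCx Q)) where
  toFun := pushC F (antiCompPres hF)
  invFun := pushC G (antiCompPres hG)
  left_inv := by
    rw [pushC_comp F (antiCompPres hF) G (antiCompPres hG) (monoCompPres (hG.comp hF))]
    rw [← pushC_id]
    exact ⟨(prismHt id (G ∘ F) monotone_id (hG.comp hF) hGF).symm⟩
  right_inv := by
    rw [pushC_comp G (antiCompPres hG) F (antiCompPres hF) (monoCompPres (hF.comp hG))]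
    rw [← pushC_id]
    exact ⟨(prismHt id (F ∘ G) monotone_id (hF.comp hG) hFG).symm⟩

end Assemble

section Dowker

theorem dowker {V : Type*} [Fintype V] (H : Set (Set V)) [Fintype ↥H] :
    Nonempty (ContinuousMap.HomotopyEquiv
      (↥(geomReal (thetaComplex (dualEdges H))))
      (↥(geomReal (thetaComplex H)))) := by
  have hneV : ∀ σ ∈ thetaComplex H, σ.Nonempty := fun σ hσ => hσ.1
  have hdcV : ∀ σ ∈ thetaComplex H, ∀ τ, τ ⊆ σ → τ.Nonempty → τ ∈ thetaComplex H := by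
    intro σ hσ τ hsub hne
    obtain ⟨_, h, hH, hd⟩ := hσ
    exact ⟨hne, h, hH, fun v hv => hd v (hsub hv)⟩
  have hneH : ∀ σ ∈ thetaComplex (dualEdges H), σ.Nonempty := fun σ hσ => hσ.1
  have hdcH : ∀ σ ∈ thetaComplex (dualEdges H), ∀ τ, τ ⊆ σ → τ.Nonempty →
      τ ∈ thetaComplex (dualEdges H) := by
    intro σ hσ τ hsub hne
    obtain ⟨_, e, hE, hd⟩ := hσ
    exact ⟨hne, e, hE, fun h hh => hd h (hsub hh)⟩
  let F : {σ : Finset V // σ ∈ thetaComplex H} →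
      {τ : Finset ↥H // τ ∈ thetaComplex (dualEdges H)} := fun σ =>
    ⟨Finset.univ.filter (fun h : ↥H => ∀ v ∈ σ.1, v ∉ (h : Set V)), by
      obtain ⟨hσne, h₀, h₀H, hd⟩ := σ.2
      constructor
      · exact ⟨⟨h₀, h₀H⟩, Finset.mem_filter.2 ⟨Finset.mem_univ _, hd⟩⟩
      · obtain ⟨v, hv⟩ := hσne
        refine ⟨{h : ↥H | v ∈ (h : Set V)}, ⟨v, rfl⟩, ?_⟩
        intro h hh
        have := (Finset.mem_filter.1 hh).2 v hv
        simpa using this⟩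
  let G : {τ : Finset ↥H // τ ∈ thetaComplex (dualEdges H)} →
      {σ : Finset V // σ ∈ thetaComplex H} := fun τ =>
    ⟨Finset.univ.filter (fun v : V => ∀ h ∈ τ.1, v ∉ (h : Set V)), by
      obtain ⟨hτne, e, he, hd⟩ := τ.2
      obtain ⟨v, rfl⟩ := he
      constructor
      · refine ⟨v, Finset.mem_filter.2 ⟨Finset.mem_univ _, ?_⟩⟩
        intro h hh
        have := hd h hh
        simpa using this
      · obtain ⟨h₀, hh₀⟩ := hτne
        refine ⟨h₀.1, h₀.2, ?_⟩
        intro w hw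
        exact (Finset.mem_filter.1 hw).2 h₀ hh₀⟩
  have hF : Antitone F := by
    intro σ σ' hle
    show (F σ').1 ⊆ (F σ).1
    intro h hh
    refine Finset.mem_filter.2 ⟨Finset.mem_univ _, ?_⟩
    intro v hv
    exact (Finset.mem_filter.1 hh).2 v (hle hv)
  have hG : Antitone G := by
    intro τ τ' hle
    show (G τ').1 ⊆ (G τ).1
    intro v hv
    refine Finset.mem_filter.2 ⟨Finset.mem_univ _, ?_⟩
    intro h hh
    exact (Finset.mem_filter.1 hv).2 h (hle hh)
  have hGF : ∀ p, p ≤ G (F p) := by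
    intro p
    show p.1 ⊆ (G (F p)).1
    intro v hv
    refine Finset.mem_filter.2 ⟨Finset.mem_univ _, ?_⟩
    intro h hh
    exact (Finset.mem_filter.1 hh).2 v hv
  have hFG : ∀ q, q ≤ F (G q) := by
    intro q
    show q.1 ⊆ (F (G q)).1
    intro h hh
    refine Finset.mem_filter.2 ⟨Finset.mem_univ _, ?_⟩
    intro v hv
    exact (Finset.mem_filter.1 hv).2 h hh
  exact ⟨((subdivHomeo hneH hdcH).symm.toHomotopyEquiv).trans
    (((galoisHE F G hF hG hGF hFG).symm).trans
      (subdivHomeo hneV hdcV).toHomotopyEquiv)⟩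

end Dowker

end
end DowkerAux

/-- If `𝓗` is a finite hypergraph in which every vertex avoids
at least one hyperedge, then `Θ(𝓗*)` is homotopy equivalent to `Θ(𝓗)`. -/
theorem theta_dual_homotopyEquiv {V : Type*} [Finite V] [Nonempty V] (H : Set (Set V))
    (hcover : ∀ v : V, ∃ h ∈ H, v ∉ h) :
    Nonempty (ContinuousMap.HomotopyEquiv
      (↥(geomReal (thetaComplex (dualEdges H))))
      (↥(geomReal (thetaComplex H)))) := by
  have : Fintype V := Fintype.ofFinite V
  have : Fintype ↥H := Fintype.ofFinite ↥H
  exact DowkerAux.dowker H
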